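/- Let (𝔉,𝒱)_E be an (𝔉,𝒱)_E-structure and T a term. Suppose 𝔉' ⊆ 𝔉 satisfies Sup_s(T) ⊆ 𝔉' and |𝔉'| ≤ s. Then for every term T' with N(T') ⊆ N(Sup_s(T)) ∪ N(T), if T' is reducible modulo the ideal I(𝔉'∧E), then T' is also reducible modulo the ideal I(Sup_s(T)∧E). -/

import Mathlib

attribute [local instance] Classical.propDecidable

/-- A literal is a variable together with a polarity (`true` = positive). -/
abbrev Clause (σ : Type) := Finset (σ × Bool)

/-- A CNF formula is a finite set of clauses. -/
abbrev CNF (σ : Type) := Finset (Clause σ)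

/-- The variables occurring in a clause. -/
def clauseVars {σ : Type} [DecidableEq σ] (C : Clause σ) : Finset σ := C.image Prod.fst

/-- The variables occurring in a CNF formula. -/
def cnfVars {σ : Type} [DecidableEq σ] (φ : CNF σ) : Finset σ := φ.sup clauseVars

/-- A (total) assignment satisfies a literal. -/
def litSat {σ : Type} (α : σ → Bool) (l : σ × Bool) : Prop := α l.1 = l.2

/-- A (total) assignment satisfies a clause. -/
def clauseSat {σ : Type} (α : σ → Bool) (C : Clause σ) : Prop := ∃ l ∈ C, litSat α l

/-- A (total) assignment satisfies a CNF formula. -/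
def cnfSat {σ : Type} (α : σ → Bool) (φ : CNF σ) : Prop := ∀ C ∈ φ, clauseSat α C

/-- Multilinearization: replace every exponent by its minimum with `1`. -/
noncomputable def mlin {σ 𝔽 : Type} [CommRing 𝔽] (p : MvPolynomial σ 𝔽) :
    MvPolynomial σ 𝔽 :=
  ∑ m ∈ p.support,
    MvPolynomial.monomial (Finsupp.mapRange (fun e => min e 1) (by simp) m) (p.coeff m)

/-- The polynomial translation of a clause: identifying true with `0`, the clause
`⋁_{x∈L⁺} x ∨ ⋁_{y∈L⁻} ¬y` becomes `∏_{x∈L⁺} x · ∏_{y∈L⁻} (1 - y)`. -/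
noncomputable def clausePoly {σ : Type} (𝔽 : Type) [CommRing 𝔽] (C : Clause σ) :
    MvPolynomial σ 𝔽 :=
  ∏ l ∈ C, if l.2 then MvPolynomial.X l.1 else 1 - MvPolynomial.X l.1
/-- An admissible total order on multilinear monomials (identified with finite sets of
variables): a strict linear order in which lower-degree monomials come first and which is
compatible with multiplication by monomials on disjoint sets of variables. -/
structure AdmissibleOrder (σ : Type) [DecidableEq σ] where
  lt : Finset σ → Finset σ → Prop
  irrefl : ∀ S, ¬ lt S S
  trans : ∀ {S T U : Finset σ}, lt S T → lt T U → lt S U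
  total : ∀ S T, S ≠ T → lt S T ∨ lt T S
  degree_lt : ∀ S T : Finset σ, S.card < T.card → lt S T
  mul_lt : ∀ S T m : Finset σ, lt S T → Disjoint m (S ∪ T) → lt (m ∪ S) (m ∪ T)

/-- `T` is the leading term of `Q` with respect to the admissible order `ord`. -/
def IsLeadTerm {σ 𝔽 : Type} [DecidableEq σ] [CommRing 𝔽] (ord : AdmissibleOrder σ)
    (Q T : MvPolynomial σ 𝔽) : Prop :=
  ∃ m ∈ Q.support, T = MvPolynomial.monomial m (Q.coeff m) ∧
    ∀ m' ∈ Q.support, m' ≠ m → ord.lt m'.support m.support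

/-- A term `T` is reducible modulo a set `I` of polynomials if `T` is the leading term of
some member of `I`. -/
def Reducible {σ 𝔽 : Type} [DecidableEq σ] [CommRing 𝔽] (ord : AdmissibleOrder σ)
    (I : Set (MvPolynomial σ 𝔽)) (T : MvPolynomial σ 𝔽) : Prop :=
  ∃ Q ∈ I, IsLeadTerm ord Q T

/-- `R` is the reduction of `P` modulo `I`: `R` is multilinear, `P - R ∈ I`, and every term
of `R` is irreducible modulo `I`. -/
def IsReduction {σ 𝔽 : Type} [DecidableEq σ] [CommRing 𝔽] (ord : AdmissibleOrder σ)
    (I : Set (MvPolynomial σ 𝔽)) (P R : MvPolynomial σ 𝔽) : Prop :=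
  mlin R = R ∧ P - R ∈ I ∧
    ∀ m ∈ R.support, ¬ Reducible ord I (MvPolynomial.monomial m (R.coeff m))

/-- The reduction operator `R_I` modulo `I` (well defined on multilinear polynomials when
`I` is an ideal of the multilinear ring). -/
noncomputable def redOp {σ 𝔽 : Type} [DecidableEq σ] [CommRing 𝔽] (ord : AdmissibleOrder σ)
    (I : Set (MvPolynomial σ 𝔽)) (P : MvPolynomial σ 𝔽) : MvPolynomial σ 𝔽 :=
  if h : ∃ R, IsReduction ord I P R then h.choose else 0

/-- A subset of the multilinear polynomial ring is an ideal of that ring: it consists of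
multilinear polynomials, contains `0`, and is closed under addition and under multiplication
(followed by multilinearization) by arbitrary polynomials. -/
def IsMLIdeal {σ 𝔽 : Type} [CommRing 𝔽] (I : Set (MvPolynomial σ 𝔽)) : Prop :=
  0 ∈ I ∧ (∀ p ∈ I, mlin p = p) ∧ (∀ p ∈ I, ∀ q ∈ I, p + q ∈ I) ∧
    (∀ p ∈ I, ∀ q : MvPolynomial σ 𝔽, mlin (q * p) ∈ I)

/-- The multilinear (squarefree) monomial with support `m`. -/
noncomputable def monoOf {σ : Type} [DecidableEq σ] (m : Finset σ) : σ →₀ ℕ :=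
  ∑ x ∈ m, Finsupp.single x 1
/-- A partial assignment with domain `D` and values `α` respects the CNF formula `E`:
every clause of `E` sharing a variable with `D` is satisfied by the assignment (via a
literal whose variable lies in `D`). -/
def Respects {σ : Type} [DecidableEq σ] (D : Finset σ) (α : σ → Bool) (E : CNF σ) : Prop :=
  ∀ C ∈ E, (clauseVars C ∩ D).Nonempty → ∃ l ∈ C, l.1 ∈ D ∧ α l.1 = l.2

/-- A variable set `V` respects `E` if some assignment with domain `V` respects `E`. -/
def VRespects {σ : Type} [DecidableEq σ] (V : Finset σ) (E : CNF σ) : Prop :=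
  ∃ α : σ → Bool, Respects V α E

/-- The formula `F` is respectfully satisfiable by the variable set `V` (with respect to
`E`): some assignment with domain `V` satisfies `F` and respects `E`. -/
def RSat {σ : Type} [DecidableEq σ] (E F : CNF σ) (V : Finset σ) : Prop :=
  ∃ α : σ → Bool, Respects V α E ∧ ∀ C ∈ F, ∃ l ∈ C, l.1 ∈ V ∧ α l.1 = l.2

/-- An `(𝔉,𝒱)_E`-structure: a CNF formula `Ecnf`, a family `fam` of CNF formulas, and a
family `vfam` of variable sets, each respecting `Ecnf`. -/
structure FVStructure (σ : Type) [DecidableEq σ] where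
  Ecnf : CNF σ
  fam : Finset (CNF σ)
  vfam : Finset (Finset σ)
  vfam_respects : ∀ V ∈ vfam, VRespects V Ecnf

/-- `F` and `V` are neighbours: they share a variable. -/
def Nbr {σ : Type} [DecidableEq σ] (F : CNF σ) (V : Finset σ) : Prop :=
  (cnfVars F ∩ V).Nonempty

/-- `F` and `V` are respectful neighbours. -/
def RNbr {σ : Type} [DecidableEq σ] (E F : CNF σ) (V : Finset σ) : Prop :=
  Nbr F V ∧ RSat E F V

/-- The respectful boundary of a subfamily `𝔛 ⊆ fam`: all `V ∈ vfam` that are a respectful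
neighbour of some `F ∈ 𝔛` and not a neighbour of any other member of `𝔛`. -/
noncomputable def rbdry {σ : Type} [DecidableEq σ] (S : FVStructure σ)
    (𝔛 : Finset (CNF σ)) : Finset (Finset σ) :=
  S.vfam.filter fun V =>
    ∃ F ∈ 𝔛, RNbr S.Ecnf F V ∧ ∀ F' ∈ 𝔛, F' ≠ F → ¬ Nbr F' V

/-- A respectful `(s,δ,ξ)`-boundary expander. -/
def IsRBExpander {σ : Type} [DecidableEq σ] (S : FVStructure σ) (s : ℕ) (δ ξ : ℝ) : Prop :=
  ∀ 𝔛 ⊆ S.fam, 𝔛.card ≤ s → δ * (𝔛.card : ℝ) - ξ ≤ ((rbdry S 𝔛).card : ℝ)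

/-- `𝔛` is `(s,𝒱')`-contained: `𝔛 ⊆ fam`, `|𝔛| ≤ s` and `∂(𝔛) ⊆ 𝒱'`. -/
def Contained {σ : Type} [DecidableEq σ] (S : FVStructure σ) (s : ℕ)
    (𝒱' : Finset (Finset σ)) (𝔛 : Finset (CNF σ)) : Prop :=
  𝔛 ⊆ S.fam ∧ 𝔛.card ≤ s ∧ rbdry S 𝔛 ⊆ 𝒱'

/-- The `s`-support of `𝒱'`: the union of all `(s,𝒱')`-contained subsets of `fam`. -/
noncomputable def suppV {σ : Type} [DecidableEq σ] (S : FVStructure σ) (s : ℕ)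
    (𝒱' : Finset (Finset σ)) : Finset (CNF σ) :=
  S.fam.filter fun F => ∃ 𝔛, Contained S s 𝒱' 𝔛 ∧ F ∈ 𝔛

/-- The overlap of a family of variable sets: the maximum number of sets that contain any
single variable. -/
noncomputable def overlap {σ : Type} [Fintype σ] [DecidableEq σ]
    (𝒱 : Finset (Finset σ)) : ℕ :=
  Finset.univ.sup fun x : σ => (𝒱.filter fun V => x ∈ V).card

/-- The neighbourhood `N(T)` of a (multilinear) monomial `m`: all `V ∈ vfam` meeting it. -/
noncomputable def nbrsM {σ : Type} [DecidableEq σ] (S : FVStructure σ) (m : Finset σ) :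
    Finset (Finset σ) :=
  S.vfam.filter fun V => (m ∩ V).Nonempty

/-- The neighbourhood of a subfamily `𝔛 ⊆ fam`. -/
noncomputable def nbrsF {σ : Type} [DecidableEq σ] (S : FVStructure σ)
    (𝔛 : Finset (CNF σ)) : Finset (Finset σ) :=
  S.vfam.filter fun V => ∃ F ∈ 𝔛, (cnfVars F ∩ V).Nonempty

/-- The `s`-support `Sup_s(T)` of a term with monomial `m`, i.e. `Sup_s(N(T))`. -/
noncomputable def suppM {σ : Type} [DecidableEq σ] (S : FVStructure σ) (s : ℕ)
    (m : Finset σ) : Finset (CNF σ) :=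
  suppV S s (nbrsM S m)

/-- All clauses of the CNF formula `𝔛 ∧ E`. -/
noncomputable def clausesOf {σ : Type} [DecidableEq σ] (S : FVStructure σ)
    (𝔛 : Finset (CNF σ)) : CNF σ :=
  𝔛.sup id ∪ S.Ecnf
/-- The ideal `I(𝔛 ∧ E)` of the multilinear ring generated by the polynomial translations
of all clauses of the formulas in `𝔛` together with all clauses of `E`. -/
def idealOf {σ : Type} (𝔽 : Type) [Field 𝔽] [DecidableEq σ] (S : FVStructure σ)
    (𝔛 : Finset (CNF σ)) : Set (MvPolynomial σ 𝔽) :=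
  { P | ∃ q : Clause σ → MvPolynomial σ 𝔽,
      P = mlin (∑ C ∈ clausesOf S 𝔛, q C * clausePoly 𝔽 C) }

/-- The neighbourhood `N(P)` of a polynomial: all `V ∈ vfam` meeting a variable of `P`. -/
noncomputable def nbrsP {σ 𝔽 : Type} [DecidableEq σ] [CommRing 𝔽] (S : FVStructure σ)
    (P : MvPolynomial σ 𝔽) : Finset (Finset σ) :=
  S.vfam.filter fun V => (P.vars ∩ V).Nonempty
set_option linter.unusedSectionVars false
section Stmt6Aux

open MvPolynomial Finset

variable {σ 𝔽 : Type} [DecidableEq σ] [CommRing 𝔽]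

/-- squarefree-ification of an exponent vector -/
noncomputable def sqE (m : σ →₀ ℕ) : σ →₀ ℕ :=
  Finsupp.mapRange (fun e => min e 1) (by simp) m

lemma sqE_apply (m : σ →₀ ℕ) (x : σ) : sqE m x = min (m x) 1 := rfl

lemma sqE_support (m : σ →₀ ℕ) : (sqE m).support = m.support := by
  ext x
  simp only [Finsupp.mem_support_iff, sqE_apply]
  omega

lemma sqE_sqE (m : σ →₀ ℕ) : sqE (sqE m) = sqE m := by
  ext x; simp only [sqE_apply]; omega

lemma mlin_def (p : MvPolynomial σ 𝔽) :
    mlin p = ∑ m ∈ p.support, monomial (sqE m) (p.coeff m) := rfl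

lemma mlin_eq_superset {p : MvPolynomial σ 𝔽} {s : Finset (σ →₀ ℕ)}
    (h : p.support ⊆ s) :
    mlin p = ∑ m ∈ s, monomial (sqE m) (p.coeff m) := by
  rw [mlin_def]
  exact Finset.sum_subset h (fun m _ hm => by
    rw [MvPolynomial.notMem_support_iff.mp hm, monomial_zero])

lemma mlin_zero : mlin (0 : MvPolynomial σ 𝔽) = 0 := by
  simp [mlin_def]

lemma mlin_add (p q : MvPolynomial σ 𝔽) : mlin (p + q) = mlin p + mlin q := by
  rw [mlin_eq_superset (s := p.support ∪ q.support) MvPolynomial.support_add,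
      mlin_eq_superset (s := p.support ∪ q.support) Finset.subset_union_left,
      mlin_eq_superset (s := p.support ∪ q.support) Finset.subset_union_right,
      ← Finset.sum_add_distrib]
  exact Finset.sum_congr rfl fun m _ => by rw [coeff_add, map_add]

lemma mlin_sum {ι : Type*} (s : Finset ι) (f : ι → MvPolynomial σ 𝔽) :
    mlin (∑ i ∈ s, f i) = ∑ i ∈ s, mlin (f i) := by
  classical
  induction s using Finset.induction with
  | empty => simp [mlin_zero]
  | insert a s h ih => rw [Finset.sum_insert h, Finset.sum_insert h, mlin_add, ih]

lemma mlin_monomial (m : σ →₀ ℕ) (c : 𝔽) :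
    mlin (monomial m c) = monomial (sqE m) c := by
  by_cases hc : c = 0
  · simp [hc, mlin_zero]
  · rw [mlin_def, MvPolynomial.support_monomial, if_neg hc, Finset.sum_singleton,
      coeff_monomial, if_pos rfl]


variable (V : Finset σ)

/-- restriction ring hom: substitute `C (ε x)` for `x ∈ V`. -/
noncomputable def rmap (ε : σ → 𝔽) : MvPolynomial σ 𝔽 →+* MvPolynomial σ 𝔽 :=
  MvPolynomial.eval₂Hom MvPolynomial.C (fun x => if x ∈ V then C (ε x) else X x)

/-- restriction of an exponent vector: kill variables in `V`. -/
noncomputable def restrE (m : σ →₀ ℕ) : σ →₀ ℕ := m.filter (fun x => x ∉ V)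

lemma restrE_apply (m : σ →₀ ℕ) (x : σ) :
    restrE V m x = if x ∉ V then m x else 0 := by
  simp [restrE, Finsupp.filter_apply]

lemma restrE_support (m : σ →₀ ℕ) :
    (restrE V m).support = m.support.filter (fun x => x ∉ V) := by
  ext x
  simp only [Finset.mem_filter, Finsupp.mem_support_iff, restrE_apply]
  by_cases h : x ∈ V <;> simp [h]

lemma restrE_eq_self {m : σ →₀ ℕ} (h : ∀ x ∈ m.support, x ∉ V) :
    restrE V m = m := by
  ext x
  rw [restrE_apply]
  by_cases hx : x ∈ V
  · simp only [hx, not_true_eq_false, if_false]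
    by_cases hs : x ∈ m.support
    · exact absurd hx (h x hs)
    · exact (Finsupp.notMem_support_iff.mp hs).symm
  · simp [hx]

lemma restrE_support_ssubset {m : σ →₀ ℕ} (h : restrE V m ≠ m) :
    (restrE V m).support ⊂ m.support := by
  have hsub : (restrE V m).support ⊆ m.support := by
    rw [restrE_support]; exact Finset.filter_subset _ _
  refine Finset.ssubset_iff_subset_ne.mpr ⟨hsub, fun heq => ?_⟩
  refine h (restrE_eq_self V fun x hx => ?_)
  have hx' : x ∈ (restrE V m).support := heq ▸ hx
  rw [restrE_support, Finset.mem_filter] at hx'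
  exact hx'.2

lemma rmap_monomial (ε : σ → 𝔽) (m : σ →₀ ℕ) (c : 𝔽) :
    rmap V ε (monomial m c) =
      C (∏ x ∈ m.support ∩ V, ε x ^ m x) * monomial (restrE V m) c := by
  rw [rmap, eval₂Hom_monomial]
  have hsplit : (m.prod fun x e => (if x ∈ V then C (ε x) else X x) ^ e) =
      (∏ x ∈ m.support.filter (· ∈ V), C (ε x) ^ m x) *
        (∏ x ∈ m.support.filter (· ∉ V), X x ^ m x) := by
    rw [Finsupp.prod, ← Finset.prod_filter_mul_prod_filter_not m.support (· ∈ V)]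
    congr 1
    · exact Finset.prod_congr rfl fun x hx => by
        rw [if_pos (Finset.mem_filter.mp hx).2]
    · exact Finset.prod_congr rfl fun x hx => by
        rw [if_neg (Finset.mem_filter.mp hx).2]
  rw [hsplit]
  have h1 : (∏ x ∈ m.support.filter (· ∈ V), C (ε x) ^ m x) =
      (C (∏ x ∈ m.support ∩ V, ε x ^ m x) : MvPolynomial σ 𝔽) := by
    rw [Finset.filter_mem_eq_inter, map_prod]
    exact Finset.prod_congr rfl fun x _ => by rw [map_pow]
  have h2 : (∏ x ∈ m.support.filter (· ∉ V), X x ^ m x) =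
      (monomial (restrE V m) (1 : 𝔽)) := by
    rw [monomial_eq, map_one, one_mul, Finsupp.prod, restrE_support]
    exact Finset.prod_congr rfl fun x hx => by
      rw [restrE_apply, if_pos (Finset.mem_filter.mp hx).2]
  rw [h1, h2, monomial_eq, monomial_eq, map_one, one_mul]
  ring

lemma pow_of_zero_or_one {ε : 𝔽} (hε : ε = 0 ∨ ε = 1) {e : ℕ} (he : e ≠ 0) :
    ε ^ e = ε := by
  rcases hε with h | h <;> subst h
  · exact zero_pow he
  · exact one_pow e

lemma sqE_restrE (m : σ →₀ ℕ) : sqE (restrE V m) = restrE V (sqE m) := by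
  ext x
  rw [sqE_apply, restrE_apply, restrE_apply, sqE_apply]
  by_cases h : x ∉ V <;> simp [h]

lemma rmap_mlin {ε : σ → 𝔽} (hε : ∀ x, ε x = 0 ∨ ε x = 1) (p : MvPolynomial σ 𝔽) :
    rmap V ε (mlin p) = mlin (rmap V ε p) := by
  conv_rhs => rw [p.as_sum]
  rw [mlin_def, map_sum, map_sum, mlin_sum]
  refine Finset.sum_congr rfl fun m _ => ?_
  rw [rmap_monomial, rmap_monomial, C_mul_monomial, C_mul_monomial, mlin_monomial,
    sqE_restrE, sqE_support]
  congr 2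
  refine Finset.prod_congr rfl fun x hx => ?_
  have hx' : m x ≠ 0 := Finsupp.mem_support_iff.mp (Finset.mem_inter.mp hx).1
  rw [sqE_apply]
  have h1 : min (m x) 1 = 1 := by omega
  rw [h1, pow_one, pow_of_zero_or_one (hε x) hx']


lemma rmap_repr (ε : σ → 𝔽) (Q : MvPolynomial σ 𝔽) :
    rmap V ε Q = ∑ m ∈ Q.support,
      C (∏ x ∈ m.support ∩ V, ε x ^ m x) * monomial (restrE V m) (Q.coeff m) := by
  conv_lhs => rw [Q.as_sum]
  rw [map_sum]
  exact Finset.sum_congr rfl fun m _ => rmap_monomial V ε m (Q.coeff m)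

lemma rmap_coeff (ε : σ → 𝔽) (Q : MvPolynomial σ 𝔽) (n : σ →₀ ℕ) :
    (rmap V ε Q).coeff n = ∑ m ∈ Q.support,
      (∏ x ∈ m.support ∩ V, ε x ^ m x) * (if restrE V m = n then Q.coeff m else 0) := by
  rw [rmap_repr, MvPolynomial.coeff_sum]
  exact Finset.sum_congr rfl fun m _ => by rw [coeff_C_mul, coeff_monomial]

lemma isLeadTerm_rmap (ord : AdmissibleOrder σ) {Q : MvPolynomial σ 𝔽} {μ : σ →₀ ℕ}
    {a : 𝔽} (ha : a ≠ 0) (hdisj : μ.support ∩ V = ∅) (ε : σ → 𝔽)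
    (hlead : IsLeadTerm ord Q (monomial μ a)) :
    IsLeadTerm ord (rmap V ε Q) (monomial μ a) := by
  obtain ⟨m₀, hm₀, hTeq, hmax⟩ := hlead
  rcases (MvPolynomial.monomial_eq_monomial_iff _ _ _ _).mp hTeq with ⟨hμm, hac⟩ | ⟨h0, _⟩
  swap
  · exact absurd h0 ha
  subst hμm
  have hμsupp : μ ∈ Q.support := hm₀
  have hμV : ∀ x ∈ μ.support, x ∉ V := by
    intro x hx hv
    have : x ∈ μ.support ∩ V := Finset.mem_inter.mpr ⟨hx, hv⟩
    rw [hdisj] at this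
    exact absurd this (Finset.notMem_empty x)
  have hrμ : restrE V μ = μ := restrE_eq_self V hμV
  have horder : ∀ m ∈ Q.support, m ≠ μ → ord.lt (restrE V m).support μ.support := by
    intro m hm hne
    by_cases h : restrE V m = m
    · rw [h]; exact hmax m hm hne
    · exact ord.trans
        (ord.degree_lt _ _ (Finset.card_lt_card (restrE_support_ssubset V h)))
        (hmax m hm hne)
  have hrneq : ∀ m ∈ Q.support, m ≠ μ → restrE V m ≠ μ := by
    intro m hm hne heq
    have := horder m hm hne
    rw [heq] at this
    exact ord.irrefl _ this
  have hμcoeff : (rmap V ε Q).coeff μ = a := by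
    rw [rmap_coeff]
    rw [Finset.sum_eq_single_of_mem μ hμsupp]
    · rw [if_pos hrμ, hdisj, Finset.prod_empty, one_mul, hac]
    · intro m hm hne
      rw [if_neg (hrneq m hm hne), mul_zero]
  refine ⟨μ, ?_, ?_, ?_⟩
  · rw [MvPolynomial.mem_support_iff, hμcoeff]; exact ha
  · rw [hμcoeff]
  · intro n hn hne
    have hcn : (rmap V ε Q).coeff n ≠ 0 := MvPolynomial.mem_support_iff.mp hn
    obtain ⟨m, hm, hmn⟩ : ∃ m ∈ Q.support, restrE V m = n := by
      by_contra hc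
      push_neg at hc
      refine hcn ?_
      rw [rmap_coeff]
      exact Finset.sum_eq_zero fun m hm => by rw [if_neg (hc m hm), mul_zero]
    have hmne : m ≠ μ := fun e => hne (by rw [← hmn, e, hrμ])
    exact hmn ▸ horder m hm hmne

lemma rmap_X_mem {x : σ} (ε : σ → 𝔽) (h : x ∈ V) :
    rmap V ε (X x) = C (ε x) := by
  simp [rmap, h]

lemma rmap_X_not_mem {x : σ} (ε : σ → 𝔽) (h : x ∉ V) :
    rmap V ε (X x) = X x := by
  simp [rmap, h]

lemma rmap_clausePoly_zero (α : σ → Bool) {C : Clause σ} {l : σ × Bool}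
    (hl : l ∈ C) (hlV : l.1 ∈ V) (hsat : α l.1 = l.2) :
    rmap V (fun x => if α x then (0 : 𝔽) else 1) (clausePoly 𝔽 C) = 0 := by
  rw [clausePoly, map_prod]
  refine Finset.prod_eq_zero hl ?_
  cases hb : l.2 with
  | true =>
    rw [hb] at hsat
    simp [hb, rmap_X_mem V _ hlV, hsat]
  | false =>
    rw [hb] at hsat
    simp [hb, rmap_X_mem V _ hlV, hsat]
lemma rmap_clausePoly_self (ε : σ → 𝔽) {C : Clause σ} (h : ∀ l ∈ C, l.1 ∉ V) :
    rmap V ε (clausePoly 𝔽 C) = clausePoly 𝔽 C := by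
  rw [show clausePoly 𝔽 C = ∏ l ∈ C, if l.2 then X l.1 else 1 - X l.1 from rfl, map_prod]
  refine Finset.prod_congr rfl fun l hl => ?_
  cases hb : l.2 with
  | true => simp [hb, rmap_X_not_mem V _ (h l hl)]
  | false => simp [hb, rmap_X_not_mem V _ (h l hl)]

lemma monoOf_apply (m : Finset σ) (y : σ) :
    monoOf m y = if y ∈ m then 1 else 0 := by
  rw [monoOf, Finsupp.finset_sum_apply]
  simp [Finsupp.single_apply]

lemma monoOf_support (m : Finset σ) : (monoOf m).support = m := by
  ext y
  rw [Finsupp.mem_support_iff, monoOf_apply]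
  by_cases h : y ∈ m <;> simp [h]


lemma clauseVars_subset_cnfVars {C : Clause σ} {G : CNF σ} (h : C ∈ G) :
    clauseVars C ⊆ cnfVars G := by
  simpa [cnfVars] using Finset.le_sup (f := clauseVars) h

end Stmt6Aux

section Stmt6Aux2
set_option linter.unusedSectionVars false
open MvPolynomial Finset

variable {σ 𝔽 : Type} [DecidableEq σ] [Field 𝔽]

lemma ideal_restr (S : FVStructure σ)
    (𝔛 : Finset (CNF σ)) {F : CNF σ} (hF : F ∈ 𝔛) (V : Finset σ) (α : σ → Bool)
    (hresp : Respects V α S.Ecnf)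
    (hsatF : ∀ C ∈ F, ∃ l ∈ C, l.1 ∈ V ∧ α l.1 = l.2)
    (hother : ∀ G ∈ 𝔛, G ≠ F → cnfVars G ∩ V = ∅)
    {Q : MvPolynomial σ 𝔽} (hQ : Q ∈ idealOf 𝔽 S 𝔛) :
    rmap V (fun x => if α x then (0:𝔽) else 1) Q ∈ idealOf 𝔽 S (𝔛.erase F) := by
  classical
  set ε : σ → 𝔽 := fun x => if α x then 0 else 1 with hεdef
  obtain ⟨q, hq⟩ := hQ
  refine ⟨fun C => if (clauseVars C ∩ V).Nonempty then 0 else rmap V ε (q C), ?_⟩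
  rw [hq, rmap_mlin V (fun x => by by_cases h : α x <;> simp [hεdef, h]), map_sum]
  congr 1
  have hsub : clausesOf S (𝔛.erase F) ⊆ clausesOf S 𝔛 :=
    Finset.union_subset_union (Finset.sup_mono (Finset.erase_subset F 𝔛)) subset_rfl
  have hpt : ∀ C ∈ clausesOf S 𝔛,
      rmap V ε (q C * clausePoly 𝔽 C) =
        (if (clauseVars C ∩ V).Nonempty then 0 else rmap V ε (q C)) * clausePoly 𝔽 C := by
    intro C hC
    have hC2 : C ∈ 𝔛.sup id ∪ S.Ecnf := hC
    by_cases hCV : (clauseVars C ∩ V).Nonempty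
    · rw [if_pos hCV, zero_mul, map_mul]
      have h0 : rmap V ε (clausePoly 𝔽 C) = 0 := by
        rcases Finset.mem_union.mp hC2 with hCX | hCE
        · obtain ⟨G, hG, hCG⟩ := Finset.mem_sup.mp hCX
          by_cases hGF : G = F
          · subst hGF
            obtain ⟨l, hl, hlV, hsat⟩ := hsatF C hCG
            exact rmap_clausePoly_zero V α hl hlV hsat
          · exfalso
            obtain ⟨x, hx⟩ := hCV
            have hx' := Finset.mem_inter.mp hx
            have hmem : x ∈ cnfVars G ∩ V :=
              Finset.mem_inter.mpr ⟨clauseVars_subset_cnfVars hCG hx'.1, hx'.2⟩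
            rw [hother G hG hGF] at hmem
            exact Finset.notMem_empty x hmem
        · obtain ⟨l, hl, hlV, hsat⟩ := hresp C hCE hCV
          exact rmap_clausePoly_zero V α hl hlV hsat
      rw [h0, mul_zero]
    · rw [if_neg hCV, map_mul, rmap_clausePoly_self V ε ?hvars]
      case hvars =>
        intro l hl hlv
        exact hCV ⟨l.1, Finset.mem_inter.mpr ⟨Finset.mem_image_of_mem _ hl, hlv⟩⟩
  rw [Finset.sum_congr rfl hpt]
  symm
  refine Finset.sum_subset hsub ?_
  intro C hC hC'
  have hC2 : C ∈ 𝔛.sup id ∪ S.Ecnf := hC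
  have hC2' : C ∉ (𝔛.erase F).sup id ∪ S.Ecnf := hC'
  have hCE : C ∉ S.Ecnf := fun h => hC2' (Finset.mem_union_right _ h)
  rcases Finset.mem_union.mp hC2 with hCX | hCE'
  swap
  · exact absurd hCE' hCE
  obtain ⟨G, hG, hCG⟩ := Finset.mem_sup.mp hCX
  by_cases hGF : G = F
  · subst hGF
    obtain ⟨l, hl, hlV, hsat⟩ := hsatF C hCG
    show (if (clauseVars C ∩ V).Nonempty then 0 else rmap V ε (q C)) * clausePoly 𝔽 C = 0
    rw [if_pos ⟨l.1, Finset.mem_inter.mpr ⟨Finset.mem_image_of_mem _ hl, hlV⟩⟩, zero_mul]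
  · exact absurd (Finset.mem_union_left _
      (Finset.mem_sup.mpr ⟨G, Finset.mem_erase.mpr ⟨hGF, hG⟩, hCG⟩)) hC2'

lemma subset_suppV_of_contained {S : FVStructure σ} {s : ℕ} {𝒱' : Finset (Finset σ)}
    {𝔛 : Finset (CNF σ)} (h : Contained S s 𝒱' 𝔛) : 𝔛 ⊆ suppV S s 𝒱' :=
  fun F hF => Finset.mem_filter.mpr ⟨h.1 hF, ⟨𝔛, h, hF⟩⟩

lemma contained_suppM {S : FVStructure σ} {s : ℕ} {mT : Finset σ}
    (hcard : (suppM S s mT).card ≤ s) : Contained S s (nbrsM S mT) (suppM S s mT) := by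
  refine ⟨Finset.filter_subset _ _, hcard, ?_⟩
  intro W hW
  obtain ⟨hWv, G, hG, hRN, hothers⟩ := Finset.mem_filter.mp hW
  obtain ⟨hGfam, 𝔜, hcont, hG𝔜⟩ := Finset.mem_filter.mp hG
  have hW𝔜 : W ∈ rbdry S 𝔜 := Finset.mem_filter.mpr
    ⟨hWv, G, hG𝔜, hRN, fun F' hF' hne =>
      hothers F' (subset_suppV_of_contained hcont hF') hne⟩
  exact hcont.2.2 hW𝔜

lemma mem_rbdry_iff {S : FVStructure σ} {𝔛 : Finset (CNF σ)} {V : Finset σ} :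
    V ∈ rbdry S 𝔛 ↔ V ∈ S.vfam ∧
      ∃ F ∈ 𝔛, RNbr S.Ecnf F V ∧ ∀ F' ∈ 𝔛, F' ≠ F → ¬ Nbr F' V :=
  Finset.mem_filter

lemma mem_nbrsF_iff {S : FVStructure σ} {𝔛 : Finset (CNF σ)} {V : Finset σ} :
    V ∈ nbrsF S 𝔛 ↔ V ∈ S.vfam ∧ ∃ F ∈ 𝔛, (cnfVars F ∩ V).Nonempty :=
  Finset.mem_filter

lemma mem_nbrsM_iff {S : FVStructure σ} {m : Finset σ} {V : Finset σ} :
    V ∈ nbrsM S m ↔ V ∈ S.vfam ∧ (m ∩ V).Nonempty :=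
  Finset.mem_filter

end Stmt6Aux2

set_option maxHeartbeats 1000000 in
/-- let `T = aT·∏_{x∈mT} x` be a term and suppose `𝔛 ⊆ 𝔉` satisfies
`Sup_s(T) ⊆ 𝔛` and `|𝔛| ≤ s`. Then every term `T' = a'·∏_{x∈m'} x` with
`N(T') ⊆ N(Sup_s(T)) ∪ N(T)` that is reducible modulo `I(𝔛∧E)` is also reducible modulo
`I(Sup_s(T)∧E)`. -/
theorem stmt6 {𝔽 σ : Type} [Field 𝔽] [Fintype σ] [DecidableEq σ]
    (ord : AdmissibleOrder σ) (S : FVStructure σ) (s : ℕ)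
    (aT : 𝔽) (haT : aT ≠ 0) (mT : Finset σ)
    (𝔛 : Finset (CNF σ)) (hsub : 𝔛 ⊆ S.fam)
    (hsupp : suppM S s mT ⊆ 𝔛) (hcard : 𝔛.card ≤ s)
    (a' : 𝔽) (ha' : a' ≠ 0) (m' : Finset σ)
    (hN : nbrsM S m' ⊆ nbrsF S (suppM S s mT) ∪ nbrsM S mT)
    (hred : Reducible ord (idealOf 𝔽 S 𝔛) (MvPolynomial.monomial (monoOf m') a')) :
    Reducible ord (idealOf 𝔽 S (suppM S s mT)) (MvPolynomial.monomial (monoOf m') a') := by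
  classical
  have key : ∀ (n : ℕ) (𝔜 : Finset (CNF σ)), 𝔜.card ≤ n → 𝔜 ⊆ S.fam →
      suppM S s mT ⊆ 𝔜 → 𝔜.card ≤ s →
      Reducible ord (idealOf 𝔽 S 𝔜) (MvPolynomial.monomial (monoOf m') a') →
      Reducible ord (idealOf 𝔽 S (suppM S s mT)) (MvPolynomial.monomial (monoOf m') a') := by
    intro n
    induction n with
    | zero =>
      intro 𝔜 hn hfam hSupsub hcard' hred'
      have h0 : 𝔜 = ∅ := Finset.card_eq_zero.mp (Nat.le_zero.mp hn)
      have hXS : 𝔜 ⊆ suppM S s mT := by rw [h0]; exact Finset.empty_subset _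
      rwa [Finset.Subset.antisymm hXS hSupsub] at hred'
    | succ n ih =>
      intro 𝔜 hn hfam hSupsub hcard' hred'
      by_cases hXS : 𝔜 ⊆ suppM S s mT
      · rwa [Finset.Subset.antisymm hXS hSupsub] at hred'
      · have hSupcard : (suppM S s mT).card ≤ s :=
          le_trans (Finset.card_le_card hSupsub) hcard'
        have hnc : ¬ Contained S s (nbrsM S mT) 𝔜 :=
          fun h => hXS (subset_suppV_of_contained h)
        have hnb : ¬ (rbdry S 𝔜 ⊆ nbrsM S mT) := fun h => hnc ⟨hfam, hcard', h⟩
        obtain ⟨V, hVb, hVnm⟩ := Finset.not_subset.mp hnb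
        obtain ⟨hVv, F, hF𝔜, hRN, hothers⟩ := mem_rbdry_iff.mp hVb
        have hFS : F ∉ suppM S s mT := by
          intro hFSup
          refine hVnm ((contained_suppM hSupcard).2.2 ?_)
          exact mem_rbdry_iff.mpr ⟨hVv, F, hFSup, hRN,
            fun F' hF' hne => hothers F' (hSupsub hF') hne⟩
        have hVnF : V ∉ nbrsF S (suppM S s mT) := by
          intro h
          obtain ⟨_, G, hG, hne⟩ := mem_nbrsF_iff.mp h
          exact hothers G (hSupsub hG) (fun e => hFS (e ▸ hG)) hne
        have hVm' : m' ∩ V = ∅ := by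
          have hnn : V ∉ nbrsM S m' := fun h => by
            rcases Finset.mem_union.mp (hN h) with h1 | h2
            exacts [hVnF h1, hVnm h2]
          rw [← Finset.not_nonempty_iff_eq_empty]
          exact fun hne => hnn (mem_nbrsM_iff.mpr ⟨hVv, hne⟩)
        obtain ⟨α, hresp, hsatF⟩ := hRN.2
        have hother' : ∀ G ∈ 𝔜, G ≠ F → cnfVars G ∩ V = ∅ := fun G hG hne =>
          Finset.not_nonempty_iff_eq_empty.mp (hothers G hG hne)
        obtain ⟨Q, hQI, hQlead⟩ := hred'
        have hdisj : (monoOf m').support ∩ V = ∅ := by rw [monoOf_support]; exact hVm'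
        have hstep : Reducible ord (idealOf 𝔽 S (𝔜.erase F))
            (MvPolynomial.monomial (monoOf m') a') :=
          ⟨rmap V (fun x => if α x then (0:𝔽) else 1) Q,
            ideal_restr S 𝔜 hF𝔜 V α hresp hsatF hother' hQI,
            isLeadTerm_rmap V ord ha' hdisj _ hQlead⟩
        exact ih (𝔜.erase F)
          (by rw [Finset.card_erase_of_mem hF𝔜]; omega)
          ((Finset.erase_subset F 𝔜).trans hfam)
          (fun G hG => Finset.mem_erase.mpr ⟨fun e => hFS (e ▸ hG), hSupsub hG⟩)
          (le_trans (Finset.card_le_card (Finset.erase_subset F 𝔜)) hcard') hstep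
  exact key 𝔛.card 𝔛 le_rfl hsub hsupp hcard hred
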